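/- Let G = ([N],E) have nonnegative real edge weights r_e. Suppose real numbers R_1,...,R_N ≥ 0 satisfy Σ_{i∈I} R_i ≥ r[E(I)] for every nonempty proper subset I ⊊ [N]. Then for any partition P of [N] into p ≥ 2 nonempty parts, r[E] - Σ_{i=1}^N R_i ≤ (1/(p-1))·Σ_{e∈E(P)} r_e. -/

import Mathlib

/-- Sum of edge weights over a set of (potential) edges. -/
noncomputable def wsum {N : ℕ} (r : Sym2 (Fin N) → ℝ) (s : Set (Sym2 (Fin N))) : ℝ :=
  ∑ e ∈ (Set.toFinite s).toFinset, r e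

/-- If nonnegative `R_i` satisfy `Σ_{i∈I} R_i ≥ r[E(I)]` for all nonempty
proper `I`, then for any partition into `p ≥ 2` nonempty parts,
`r[E] - Σ_i R_i ≤ (1/(p-1))·r[E(P)]`. -/
theorem stmt_9 {N p : ℕ} (hN : 2 ≤ N) (hp : 2 ≤ p) (G : SimpleGraph (Fin N))
    (r : Sym2 (Fin N) → ℝ) (hr : ∀ e, 0 ≤ r e)
    (R : Fin N → ℝ) (hRpos : ∀ i, 0 ≤ R i)
    (hcons : ∀ I : Finset (Fin N), I.Nonempty → I ≠ Finset.univ →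
      wsum r {e | e ∈ G.edgeSet ∧ ∀ v ∈ e, v ∈ I} ≤ ∑ i ∈ I, R i)
    (f : Fin N → Fin p) (hf : Function.Surjective f) :
    wsum r G.edgeSet - ∑ i, R i ≤
      (1 / (p - 1 : ℝ)) * wsum r {e | e ∈ G.edgeSet ∧ ∃ u v, e = s(u, v) ∧ f u ≠ f v} := by
  classical
  have hp1 : (0 : ℝ) < (p : ℝ) - 1 := by
    have : (2 : ℝ) ≤ (p : ℝ) := by exact_mod_cast hp
    linarith
  set Efin : Finset (Sym2 (Fin N)) := Finset.univ.filter (fun e => e ∈ G.edgeSet) with hEfin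
  set Cross : Sym2 (Fin N) → Prop := fun e => ∃ u v, e = s(u, v) ∧ f u ≠ f v with hCross
  have h0 : (0 : ℕ) < p := by omega
  have h1 : (1 : ℕ) < p := by omega
  -- the per-class constraint
  have key : ∀ α : Fin p,
      ∑ e ∈ Efin.filter (fun e => ∀ v ∈ e, f v ≠ α), r e
        ≤ ∑ i ∈ Finset.univ.filter (fun i => f i ≠ α), R i := by
    intro α
    obtain ⟨β, hβα⟩ : ∃ β : Fin p, β ≠ α := by
      by_cases h : α = ⟨0, h0⟩
      · exact ⟨⟨1, h1⟩, by simp [h, Fin.ext_iff]⟩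
      · exact ⟨⟨0, h0⟩, fun hc => h hc.symm⟩
    obtain ⟨i0, hi0⟩ := hf β
    obtain ⟨j0, hj0⟩ := hf α
    have hne : (Finset.univ.filter (fun i => f i ≠ α)).Nonempty := by
      refine ⟨i0, ?_⟩; simp [hi0, hβα]
    have hprop : Finset.univ.filter (fun i => f i ≠ α) ≠ Finset.univ := by
      intro h
      have : j0 ∈ Finset.univ.filter (fun i => f i ≠ α) := by rw [h]; simp
      simp [hj0] at this
    have hle := hcons _ hne hprop
    have heq : wsum r {e | e ∈ G.edgeSet ∧ ∀ v ∈ e,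
          v ∈ Finset.univ.filter (fun i => f i ≠ α)}
        = ∑ e ∈ Efin.filter (fun e => ∀ v ∈ e, f v ≠ α), r e := by
      rw [wsum]
      apply Finset.sum_congr _ (fun _ _ => rfl)
      ext e
      simp [hEfin, Set.Finite.mem_toFinset, Set.mem_setOf_eq, and_assoc]
    rw [heq] at hle
    exact hle
  -- sum the constraints over all α: swap the double sum
  have hsumLHS :
      ∑ α : Fin p, ∑ e ∈ Efin.filter (fun e => ∀ v ∈ e, f v ≠ α), r e
        = ∑ e ∈ Efin,
            ((Finset.univ.filter (fun α : Fin p => ∀ v ∈ e, f v ≠ α)).card : ℝ) * r e := by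
    have h : ∀ α : Fin p, ∑ e ∈ Efin.filter (fun e => ∀ v ∈ e, f v ≠ α), r e
        = ∑ e ∈ Efin, if (∀ v ∈ e, f v ≠ α) then r e else 0 := by
      intro α; rw [Finset.sum_filter]
    simp_rw [h]
    rw [Finset.sum_comm]
    apply Finset.sum_congr rfl
    intro e _
    rw [← Finset.sum_filter, Finset.sum_const, nsmul_eq_mul]
  -- per-edge count
  have hcount : ∀ e ∈ Efin,
      ((Finset.univ.filter (fun α : Fin p => ∀ v ∈ e, f v ≠ α)).card : ℝ)
        = ((p : ℝ) - 1) - (if Cross e then 1 else 0) := by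
    intro e
    refine Sym2.inductionOn e ?_
    intro u v he
    have hadj : G.Adj u v := by
      simp only [hEfin, Finset.mem_filter, Finset.mem_univ, true_and,
        SimpleGraph.mem_edgeSet] at he
      exact he
    have huv : u ≠ v := G.ne_of_adj hadj
    have hfilter : (Finset.univ.filter (fun α : Fin p => ∀ w ∈ s(u, v), f w ≠ α))
        = ({f u, f v} : Finset (Fin p))ᶜ := by
      ext α
      simp only [Finset.mem_filter, Finset.mem_univ, true_and, Finset.mem_compl,
        Finset.mem_insert, Finset.mem_singleton, Sym2.mem_iff]
      constructor
      · rintro h (h1 | h1)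
        · exact h u (Or.inl rfl) h1.symm
        · exact h v (Or.inr rfl) h1.symm
      · rintro h w (rfl | rfl) hw
        · exact h (Or.inl hw.symm)
        · exact h (Or.inr hw.symm)
    rw [hfilter, Finset.card_compl]
    have hcr : Cross s(u, v) ↔ f u ≠ f v := by
      constructor
      · rintro ⟨a, b, hab, hne⟩
        rw [Sym2.eq_iff] at hab
        rcases hab with ⟨rfl, rfl⟩ | ⟨rfl, rfl⟩
        · exact hne
        · exact hne.symm
      · intro h; exact ⟨u, v, rfl, h⟩
    by_cases hfe : f u = f v
    · have hc : ({f u, f v} : Finset (Fin p)).card = 1 := by rw [hfe]; simp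
      rw [hc]
      have hnc : ¬ Cross s(u, v) := by rw [hcr]; simpa using hfe
      rw [if_neg hnc, Fintype.card_fin, Nat.cast_sub (by omega : 1 ≤ p)]
      push_cast; ring
    · have hc : ({f u, f v} : Finset (Fin p)).card = 2 := by
        rw [Finset.card_insert_of_notMem (by simpa using hfe), Finset.card_singleton]
      rw [hc]
      have hyc : Cross s(u, v) := hcr.mpr hfe
      rw [if_pos hyc, Fintype.card_fin, Nat.cast_sub hp]
      push_cast; ring
  -- the RHS of the summed constraints
  have hsumRHS : ∑ α : Fin p, ∑ i ∈ Finset.univ.filter (fun i => f i ≠ α), R i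
      = ((p : ℝ) - 1) * ∑ i, R i := by
    have h : ∀ α : Fin p, ∑ i ∈ Finset.univ.filter (fun i => f i ≠ α), R i
        = ∑ i : Fin N, if f i ≠ α then R i else 0 := by
      intro α; rw [Finset.sum_filter]
    simp_rw [h]
    rw [Finset.sum_comm]
    have h2 : ∀ i : Fin N, ∑ α : Fin p, (if f i ≠ α then R i else 0)
        = ((p : ℝ) - 1) * R i := by
      intro i
      rw [← Finset.sum_filter, Finset.sum_const, nsmul_eq_mul]
      have hfi : (Finset.univ.filter (fun α : Fin p => f i ≠ α))
          = ({f i} : Finset (Fin p))ᶜ := by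
        ext α; simp [ne_comm, eq_comm]
      rw [hfi, Finset.card_compl, Finset.card_singleton, Fintype.card_fin,
        Nat.cast_sub (by omega : 1 ≤ p)]
      push_cast; ring
    simp_rw [h2]
    rw [← Finset.mul_sum]
  -- combine
  have hmain : ((p : ℝ) - 1) * (∑ e ∈ Efin, r e) - ∑ e ∈ Efin.filter Cross, r e
      ≤ ((p : ℝ) - 1) * ∑ i, R i := by
    have h1 := Finset.sum_le_sum (fun α (_ : α ∈ (Finset.univ : Finset (Fin p))) => key α)
    rw [hsumLHS, hsumRHS] at h1
    have h2 : ∑ e ∈ Efin,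
        ((Finset.univ.filter (fun α : Fin p => ∀ v ∈ e, f v ≠ α)).card : ℝ) * r e
        = ((p : ℝ) - 1) * (∑ e ∈ Efin, r e) - ∑ e ∈ Efin.filter Cross, r e := by
      calc ∑ e ∈ Efin,
              ((Finset.univ.filter (fun α : Fin p => ∀ v ∈ e, f v ≠ α)).card : ℝ) * r e
          = ∑ e ∈ Efin, (((p : ℝ) - 1) * r e - if Cross e then r e else 0) := by
            apply Finset.sum_congr rfl
            intro e he
            rw [hcount e he]
            by_cases hce : Cross e <;> simp [hce] <;> ring
        _ = ((p : ℝ) - 1) * (∑ e ∈ Efin, r e) - ∑ e ∈ Efin.filter Cross, r e := by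
            rw [Finset.sum_sub_distrib, ← Finset.mul_sum, ← Finset.sum_filter]
    rw [h2] at h1
    exact h1
  -- rewrite the goal's wsums
  have hws1 : wsum r G.edgeSet = ∑ e ∈ Efin, r e := by
    rw [wsum]
    apply Finset.sum_congr _ (fun _ _ => rfl)
    ext e; simp [hEfin, Set.Finite.mem_toFinset]
  have hws2 : wsum r {e | e ∈ G.edgeSet ∧ ∃ u v, e = s(u, v) ∧ f u ≠ f v}
      = ∑ e ∈ Efin.filter Cross, r e := by
    rw [wsum]
    apply Finset.sum_congr _ (fun _ _ => rfl)
    ext e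
    simp only [Set.Finite.mem_toFinset, Set.mem_setOf_eq, Finset.mem_filter, hEfin,
      Finset.mem_univ, true_and, hCross]
  rw [hws1, hws2]
  rw [div_mul_eq_mul_div, one_mul, le_div_iff₀ hp1]
  nlinarith [hmain]
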